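/- Let x_S be s-sparse with support S, and let S(k+1) be an index set of size s such that ‖(x(k) + μg)_{S\S(k+1)}‖₂ ≤ ‖(x(k) + μg)_{S(k+1)\S}‖₂, where g = AᵀA(x_S − x(k)) + h for some vectors x(k), h. Then ‖(x_S)_{complement of S(k+1)}‖₂ ≤ √2·‖((μAᵀA − I)(x_S − x(k)) + μh)_{SΔS(k+1)}‖₂, where SΔS(k+1) denotes the symmetric difference. -/
import Mathlib


open Finset Matrix

/-- Euclidean norm of a finitely-indexed real vector. -/
noncomputable def nrm {ι : Type*} [Fintype ι] (x : ι → ℝ) : ℝ :=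
  Real.sqrt (∑ i, x i ^ 2)

open Classical in
/-- Support of a vector as a finite set of indices. -/
noncomputable def spt {n : ℕ} (x : Fin n → ℝ) : Finset (Fin n) :=
  Finset.univ.filter fun i => x i ≠ 0

/-- Restriction of a vector to an index set: keep entries in `U`, zero the rest. -/
def restr {n : ℕ} (x : Fin n → ℝ) (U : Finset (Fin n)) : Fin n → ℝ :=
  fun i => if i ∈ U then x i else 0

/-- `A` satisfies the RIP of order `t` with constant `δ`. -/
def RIP {m n : ℕ} (A : Matrix (Fin m) (Fin n) ℝ) (t : ℕ) (δ : ℝ) : Prop :=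
  ∀ x : Fin n → ℝ, (spt x).card ≤ t →
    (1 - δ) * nrm x ^ 2 ≤ nrm (A.mulVec x) ^ 2 ∧
      nrm (A.mulVec x) ^ 2 ≤ (1 + δ) * nrm x ^ 2

lemma nrm_nonneg {ι : Type*} [Fintype ι] (x : ι → ℝ) : 0 ≤ nrm x :=
  Real.sqrt_nonneg _

lemma nrm_sq {ι : Type*} [Fintype ι] (x : ι → ℝ) : nrm x ^ 2 = ∑ i, x i ^ 2 :=
  Real.sq_sqrt (Finset.sum_nonneg fun i _ => sq_nonneg _)

lemma nrm_add_le {ι : Type*} [Fintype ι] (x y : ι → ℝ) :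
    nrm (x + y) ≤ nrm x + nrm y := by
  have key : ∀ z : ι → ℝ, nrm z = ‖(WithLp.equiv 2 (ι → ℝ)).symm z‖ := by
    intro z
    rw [EuclideanSpace.norm_eq]
    simp [nrm, Real.norm_eq_abs, sq_abs]
  rw [key, key, key]
  exact norm_add_le ((WithLp.equiv 2 (ι → ℝ)).symm x) ((WithLp.equiv 2 (ι → ℝ)).symm y)

theorem stmt_11 {m n : ℕ} (A : Matrix (Fin m) (Fin n) ℝ) (s : ℕ) (μ : ℝ) (hμ : 0 < μ)
    (xS xk h : Fin n → ℝ) (S T : Finset (Fin n))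
    (hS : S.card ≤ s) (hxS : spt xS ⊆ S) (hT : T.card = s)
    (g : Fin n → ℝ) (hg : g = Matrix.mulVec Aᵀ (A.mulVec (xS - xk)) + h)
    (hthres : nrm (restr (xk + μ • g) (S \ T)) ≤ nrm (restr (xk + μ • g) (T \ S))) :
    nrm (restr xS Tᶜ) ≤
      Real.sqrt 2 *
        nrm (restr (μ • Matrix.mulVec Aᵀ (A.mulVec (xS - xk)) - (xS - xk) + μ • h)
          ((S \ T) ∪ (T \ S))) := by
  classical
  set w : Fin n → ℝ := μ • Matrix.mulVec Aᵀ (A.mulVec (xS - xk)) - (xS - xk) + μ • h with hw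
  have hxS0 : ∀ i, i ∉ S → xS i = 0 := by
    intro i hi
    by_contra hne
    exact hi (hxS (by simp [spt, hne]))
  have hv : xk + μ • g = xS + w := by
    funext i
    simp only [hg, hw, Pi.add_apply, Pi.smul_apply, Pi.sub_apply, smul_eq_mul]
    ring
  -- restr xS Tᶜ = restr xS (S \ T)
  have h1 : restr xS Tᶜ = restr xS (S \ T) := by
    funext i
    simp only [restr, Finset.mem_compl, Finset.mem_sdiff]
    by_cases hiT : i ∈ T
    · simp [hiT]
    · by_cases hiS : i ∈ S
      · simp [hiT, hiS]
      · simp [hiT, hiS, hxS0 i hiS]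
  -- on T \ S, v = w
  have h3 : restr (xk + μ • g) (T \ S) = restr w (T \ S) := by
    funext i
    simp only [hv, restr, Pi.add_apply]
    by_cases hi : i ∈ T \ S
    · have hiS : i ∉ S := (Finset.mem_sdiff.mp hi).2
      have h5 := congrFun hv i
      simp only [Pi.add_apply, Pi.smul_apply, smul_eq_mul] at h5
      simp [hi, h5, hxS0 i hiS]
    · simp [hi]
  -- splitting restr xS (S\T) = restr v (S\T) - restr w (S\T)
  have h2 : restr xS (S \ T) = restr (xk + μ • g) (S \ T) + restr (-w) (S \ T) := by
    funext i
    simp only [hv, restr, Pi.add_apply, Pi.neg_apply]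
    by_cases hi : i ∈ S \ T <;> simp [hi]
  have hnegw : nrm (restr (-w) (S \ T)) = nrm (restr w (S \ T)) := by
    simp [nrm, restr, apply_ite (· ^ 2)]
  set a := nrm (restr w (S \ T)) with ha
  set b := nrm (restr w (T \ S)) with hb
  have hstep : nrm (restr xS Tᶜ) ≤ a + b := by
    rw [h1, h2]
    calc nrm (restr (xk + μ • g) (S \ T) + restr (-w) (S \ T))
        ≤ nrm (restr (xk + μ • g) (S \ T)) + nrm (restr (-w) (S \ T)) := nrm_add_le _ _
      _ ≤ b + a := by
          rw [hnegw]
          exact add_le_add (le_of_le_of_eq hthres (by rw [h3])) le_rfl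
      _ = a + b := add_comm _ _
  -- pythagoras
  have hdisj : Disjoint (S \ T) (T \ S) := by
    rw [Finset.disjoint_left]
    intro i hi hi2
    exact (Finset.mem_sdiff.mp hi2).2 (Finset.mem_sdiff.mp hi).1
  have hpyth : nrm (restr w ((S \ T) ∪ (T \ S))) ^ 2 = a ^ 2 + b ^ 2 := by
    rw [nrm_sq, ha, hb, nrm_sq, nrm_sq]
    have key : ∀ (U : Finset (Fin n)), ∑ i, restr w U i ^ 2 = ∑ i ∈ U, w i ^ 2 := by
      intro U
      rw [show (fun i => restr w U i ^ 2) = fun i => if i ∈ U then w i ^ 2 else 0 from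
        funext fun i => by by_cases hi : i ∈ U <;> simp [restr, hi]]
      rw [Finset.sum_ite_mem, Finset.univ_inter]
    rw [key, key, key, Finset.sum_union hdisj]
  have hc : 0 ≤ nrm (restr w ((S \ T) ∪ (T \ S))) := nrm_nonneg _
  have ha0 : 0 ≤ a := nrm_nonneg _
  have hb0 : 0 ≤ b := nrm_nonneg _
  have hsq : (a + b) ^ 2 ≤ 2 * nrm (restr w ((S \ T) ∪ (T \ S))) ^ 2 := by
    rw [hpyth]; nlinarith [sq_nonneg (a - b)]
  have : a + b ≤ Real.sqrt 2 * nrm (restr w ((S \ T) ∪ (T \ S))) := by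
    nlinarith [Real.sq_sqrt (by norm_num : (2:ℝ) ≥ 0), Real.sqrt_nonneg 2,
      mul_nonneg (Real.sqrt_nonneg 2) hc, sq_nonneg (Real.sqrt 2 * nrm (restr w ((S \ T) ∪ (T \ S))) - (a+b))]
  linarith
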